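/- Let ω ⊂ ℝ^d be a bounded domain, χ ∈ W^{1,∞}(ω) with 0 ≤ χ ≤ 1, and let (u, p) ∈ (H¹(ω))^d × L²₀(ω) satisfy the homogeneous Brinkman equation ∇p − Δu + κ⁻¹u = 0 in ω (weakly, tested against functions in (H¹₀(ω))^d). If χ vanishes on ∂ω, then ∫_ω χ²|∇u|² + ∫_ω κ⁻¹χ²|u|² ≤ C ( ∫_ω |∇χ|²|u|² + ∫_ω κ⁻²|u|² + ∫_ω |div u|² + ‖p‖²_{L²(ω)} ) with C an absolute constant. -/

import Mathlib

open MeasureTheory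

noncomputable def ediv {d : ℕ} (u : EuclideanSpace ℝ (Fin d) → EuclideanSpace ℝ (Fin d))
    (x : EuclideanSpace ℝ (Fin d)) : ℝ :=
  ∑ i, fderiv ℝ u x (EuclideanSpace.single i 1) i

noncomputable def gradSq {d : ℕ} (u : EuclideanSpace ℝ (Fin d) → EuclideanSpace ℝ (Fin d))
    (x : EuclideanSpace ℝ (Fin d)) : ℝ :=
  ∑ i, ‖fderiv ℝ u x (EuclideanSpace.single i 1)‖ ^ 2

noncomputable def gradInner {d : ℕ} (u v : EuclideanSpace ℝ (Fin d) → EuclideanSpace ℝ (Fin d))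
    (x : EuclideanSpace ℝ (Fin d)) : ℝ :=
  ∑ i, (inner ℝ (fderiv ℝ u x (EuclideanSpace.single i 1)) (fderiv ℝ v x (EuclideanSpace.single i 1)) : ℝ)

section Aux

variable {d : ℕ}

lemma aux_norm_sq (v : EuclideanSpace ℝ (Fin d)) : ‖v‖ ^ 2 = ∑ i, (v i) ^ 2 := by
  rw [EuclideanSpace.norm_eq, Real.sq_sqrt (by positivity)]
  simp [Real.norm_eq_abs, sq_abs]

lemma aux_grad_apply (χ : EuclideanSpace ℝ (Fin d) → ℝ) (x : EuclideanSpace ℝ (Fin d)) (i : Fin d) :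
    gradient χ x i = fderiv ℝ χ x (EuclideanSpace.single i 1) := by
  have h : (inner ℝ (gradient χ x) (EuclideanSpace.single i (1:ℝ)) : ℝ)
      = fderiv ℝ χ x (EuclideanSpace.single i 1) := by
    rw [gradient, InnerProductSpace.toDual_symm_apply]
  rw [← h, EuclideanSpace.inner_single_right]
  simp

lemma aux_fderiv_smul {χ : EuclideanSpace ℝ (Fin d) → ℝ}
    {u : EuclideanSpace ℝ (Fin d) → EuclideanSpace ℝ (Fin d)}
    (hχ : Differentiable ℝ χ) (hu : Differentiable ℝ u)
    (x v : EuclideanSpace ℝ (Fin d)) :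
    fderiv ℝ (fun y => (χ y) ^ 2 • u y) x v
      = (2 * χ x * fderiv ℝ χ x v) • u x + (χ x) ^ 2 • fderiv ℝ u x v := by
  have hc : DifferentiableAt ℝ (fun y => (χ y) ^ 2) x := (hχ x).pow 2
  have hp : fderiv ℝ (fun y => (χ y) ^ 2) x v = 2 * χ x * fderiv ℝ χ x v := by
    have h2 : (fun y => (χ y) ^ 2) = fun y => χ y * χ y := by funext y; ring
    rw [h2] at hc ⊢
    rw [fderiv_fun_mul (hχ x) (hχ x)]
    simp [smul_eq_mul]; ring
  rw [fderiv_fun_smul hc (hu x)]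
  simp only [ContinuousLinearMap.add_apply, ContinuousLinearMap.coe_smul',
    Pi.smul_apply, ContinuousLinearMap.smulRight_apply, hp]
  abel

end Aux

/-- Lemma 5.3: Caccioppoli-type inequality. If `(u, p)` satisfies the
homogeneous Brinkman equation weakly on `ω` (here recorded in the tested form with the
test function `φ = χ²u ∈ (H¹₀(ω))ᵈ`, which is admissible since `χ` vanishes on `∂ω`),
`χ ∈ W^{1,∞}(ω)` with `0 ≤ χ ≤ 1`, then
`∫ χ²|∇u|² + ∫ κ⁻¹χ²|u|² ≤ C (∫ |∇χ|²|u|² + ∫ κ⁻²|u|² + ∫ |div u|² + ‖p‖²)`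
with an absolute constant `C`. -/
theorem caccioppoli_brinkman :
    ∃ C : ℝ, 0 < C ∧
      ∀ (d : ℕ) (ω : Set (EuclideanSpace ℝ (Fin d)))
        (χ : EuclideanSpace ℝ (Fin d) → ℝ)
        (u : EuclideanSpace ℝ (Fin d) → EuclideanSpace ℝ (Fin d))
        (p κinv : EuclideanSpace ℝ (Fin d) → ℝ),
        MeasurableSet ω → Bornology.IsBounded ω →
        Differentiable ℝ χ → (∀ x, 0 ≤ χ x ∧ χ x ≤ 1) →
        (∀ x ∈ frontier ω, χ x = 0) →
        Differentiable ℝ u →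
        (∀ x ∈ ω, 0 ≤ κinv x) →
        -- p ∈ L²₀(ω)
        (∫ x in ω, p x) = 0 →
        -- weak homogeneous Brinkman equation tested with φ = χ²u:
        -- ⟨p, div(χ²u)⟩ = ⟨∇u, ∇(χ²u)⟩ + ⟨κ⁻¹u, χ²u⟩
        ((∫ x in ω, p x * ediv (fun y => (χ y) ^ 2 • u y) x)
          = (∫ x in ω, gradInner u (fun y => (χ y) ^ 2 • u y) x)
            + ∫ x in ω, κinv x * (inner ℝ (u x) ((χ x) ^ 2 • u x) : ℝ)) →
        -- integrability of the quantities involved (u ∈ H¹, p ∈ L², χ ∈ W^{1,∞})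
        IntegrableOn (fun x => (χ x) ^ 2 * gradSq u x) ω →
        IntegrableOn (fun x => κinv x * (χ x) ^ 2 * ‖u x‖ ^ 2) ω →
        IntegrableOn (fun x => ‖gradient χ x‖ ^ 2 * ‖u x‖ ^ 2) ω →
        IntegrableOn (fun x => (κinv x) ^ 2 * ‖u x‖ ^ 2) ω →
        IntegrableOn (fun x => (ediv u x) ^ 2) ω →
        IntegrableOn (fun x => (p x) ^ 2) ω →
        (∫ x in ω, (χ x) ^ 2 * gradSq u x) + (∫ x in ω, κinv x * (χ x) ^ 2 * ‖u x‖ ^ 2)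
          ≤ C * ((∫ x in ω, ‖gradient χ x‖ ^ 2 * ‖u x‖ ^ 2)
              + (∫ x in ω, (κinv x) ^ 2 * ‖u x‖ ^ 2)
              + (∫ x in ω, (ediv u x) ^ 2)
              + ∫ x in ω, (p x) ^ 2) := by
  refine ⟨12, by norm_num, ?_⟩
  intro d ω χ u p κinv hmeas _hbdd hχd hχ01 _hχ0 hud hκ0 _hp0 hweak hA hB hG hK hD hP
  -- abbreviations
  set S : EuclideanSpace ℝ (Fin d) → ℝ :=
    fun x => ∑ i, fderiv ℝ χ x (EuclideanSpace.single i 1) * (u x i) with hSdef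
  set T : EuclideanSpace ℝ (Fin d) → ℝ :=
    fun x => ∑ i, fderiv ℝ χ x (EuclideanSpace.single i 1)
      * (inner ℝ (fderiv ℝ u x (EuclideanSpace.single i 1)) (u x) : ℝ) with hTdef
  have hgradSq_nonneg : ∀ x, 0 ≤ gradSq u x := fun x =>
    Finset.sum_nonneg fun i _ => sq_nonneg _
  have hgradnorm : ∀ x, ‖gradient χ x‖ ^ 2
      = ∑ i, (fderiv ℝ χ x (EuclideanSpace.single i 1)) ^ 2 := by
    intro x
    rw [aux_norm_sq]
    exact Finset.sum_congr rfl fun i _ => by rw [aux_grad_apply]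
  -- Cauchy–Schwarz bounds on S and T
  have hS2 : ∀ x, (S x) ^ 2 ≤ ‖gradient χ x‖ ^ 2 * ‖u x‖ ^ 2 := by
    intro x
    rw [hgradnorm, aux_norm_sq]
    exact Finset.sum_mul_sq_le_sq_mul_sq _ _ _
  have hT2 : ∀ x, (T x) ^ 2 ≤ ‖gradient χ x‖ ^ 2 * (gradSq u x * ‖u x‖ ^ 2) := by
    intro x
    calc (T x) ^ 2
        ≤ (∑ i, (fderiv ℝ χ x (EuclideanSpace.single i 1)) ^ 2)
          * ∑ i, (inner ℝ (fderiv ℝ u x (EuclideanSpace.single i 1)) (u x) : ℝ) ^ 2 :=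
          Finset.sum_mul_sq_le_sq_mul_sq _ _ _
      _ ≤ (∑ i, (fderiv ℝ χ x (EuclideanSpace.single i 1)) ^ 2)
          * ∑ i, ‖fderiv ℝ u x (EuclideanSpace.single i 1)‖ ^ 2 * ‖u x‖ ^ 2 := by
          refine mul_le_mul_of_nonneg_left (Finset.sum_le_sum fun i _ => ?_)
            (Finset.sum_nonneg fun i _ => sq_nonneg _)
          have := real_inner_mul_inner_self_le
            (fderiv ℝ u x (EuclideanSpace.single i 1)) (u x)
          rw [real_inner_self_eq_norm_sq, real_inner_self_eq_norm_sq] at this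
          calc (inner ℝ (fderiv ℝ u x (EuclideanSpace.single i 1)) (u x) : ℝ) ^ 2
              = (inner ℝ (fderiv ℝ u x (EuclideanSpace.single i 1)) (u x) : ℝ)
                * (inner ℝ (fderiv ℝ u x (EuclideanSpace.single i 1)) (u x) : ℝ) := sq _
            _ ≤ _ := this
      _ = ‖gradient χ x‖ ^ 2 * (gradSq u x * ‖u x‖ ^ 2) := by
          rw [hgradnorm, gradSq, ← Finset.sum_mul]
  -- pointwise decompositions
  have hdiv : ∀ x, ediv (fun y => (χ y) ^ 2 • u y) x
      = (χ x) ^ 2 * ediv u x + 2 * χ x * S x := by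
    intro x
    simp only [ediv, aux_fderiv_smul hχd hud, PiLp.add_apply, PiLp.smul_apply, smul_eq_mul,
      hSdef, Finset.sum_add_distrib, Finset.mul_sum]
    rw [add_comm]
    congr 1 <;> exact Finset.sum_congr rfl fun i _ => by ring
  have hGI : ∀ x, gradInner u (fun y => (χ y) ^ 2 • u y) x
      = (χ x) ^ 2 * gradSq u x + 2 * χ x * T x := by
    intro x
    simp only [gradInner, aux_fderiv_smul hχd hud, inner_add_right, real_inner_smul_right,
      real_inner_self_eq_norm_sq, hTdef, gradSq, Finset.sum_add_distrib, Finset.mul_sum]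
    rw [add_comm]
    congr 1 <;> exact Finset.sum_congr rfl fun i _ => by ring
  -- cross-term bound
  have hcrossbd : ∀ x, |2 * χ x * T x|
      ≤ 2 * (‖gradient χ x‖ ^ 2 * ‖u x‖ ^ 2) + 2⁻¹ * ((χ x) ^ 2 * gradSq u x) := by
    intro x
    set G := ‖gradient χ x‖ ^ 2 * ‖u x‖ ^ 2 with hGdef
    set A := (χ x) ^ 2 * gradSq u x with hAdef
    have hGnn : 0 ≤ G := by positivity
    have hAnn : 0 ≤ A := mul_nonneg (sq_nonneg _) (hgradSq_nonneg x)
    have ht2 : (χ x * T x) ^ 2 ≤ G * A := by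
      have := hT2 x
      have h' : (χ x) ^ 2 * (T x) ^ 2
          ≤ (χ x) ^ 2 * (‖gradient χ x‖ ^ 2 * (gradSq u x * ‖u x‖ ^ 2)) :=
        mul_le_mul_of_nonneg_left this (sq_nonneg _)
      calc (χ x * T x) ^ 2 = (χ x) ^ 2 * (T x) ^ 2 := by ring
        _ ≤ (χ x) ^ 2 * (‖gradient χ x‖ ^ 2 * (gradSq u x * ‖u x‖ ^ 2)) := h'
        _ = G * A := by rw [hGdef, hAdef]; ring
    have habs : |χ x * T x| ≤ G + A / 4 := by
      have h1 : (χ x * T x) ^ 2 ≤ (G + A / 4) ^ 2 := by nlinarith [sq_nonneg (G - A / 4)]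
      calc |χ x * T x| = Real.sqrt ((χ x * T x) ^ 2) := (Real.sqrt_sq_eq_abs _).symm
        _ ≤ Real.sqrt ((G + A / 4) ^ 2) := Real.sqrt_le_sqrt h1
        _ = |G + A / 4| := Real.sqrt_sq_eq_abs _
        _ = G + A / 4 := abs_of_nonneg (by positivity)
    calc |2 * χ x * T x| = 2 * |χ x * T x| := by
          rw [mul_assoc, abs_mul]; simp
      _ ≤ 2 * (G + A / 4) := by linarith
      _ = 2 * G + 2⁻¹ * A := by ring
  -- measurability of the cross term
  have hm : Measurable fun x => 2 * χ x * T x := by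
    apply Measurable.mul
    · exact measurable_const.mul hχd.continuous.measurable
    · apply Finset.measurable_sum
      intro i _
      exact (measurable_fderiv_apply_const ℝ χ _).mul
        ((measurable_fderiv_apply_const ℝ u _).inner hud.continuous.measurable)
  have hG' : Integrable (fun x => ‖gradient χ x‖ ^ 2 * ‖u x‖ ^ 2) (volume.restrict ω) := hG
  have hA' : Integrable (fun x => (χ x) ^ 2 * gradSq u x) (volume.restrict ω) := hA
  have hD' : Integrable (fun x => (ediv u x) ^ 2) (volume.restrict ω) := hD
  have hP' : Integrable (fun x => (p x) ^ 2) (volume.restrict ω) := hP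
  have hbound_int : Integrable (fun x =>
      2 * (‖gradient χ x‖ ^ 2 * ‖u x‖ ^ 2) + 2⁻¹ * ((χ x) ^ 2 * gradSq u x))
      (volume.restrict ω) := (hG'.const_mul 2).add (hA'.const_mul 2⁻¹)
  have hcross_int : Integrable (fun x => 2 * χ x * T x) (volume.restrict ω) := by
    refine Integrable.mono' hbound_int hm.aestronglyMeasurable ?_
    filter_upwards with x
    rw [Real.norm_eq_abs]
    exact hcrossbd x
  -- rewrite the weak formulation
  have hI1 : (∫ x in ω, gradInner u (fun y => (χ y) ^ 2 • u y) x)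
      = (∫ x in ω, (χ x) ^ 2 * gradSq u x) + ∫ x in ω, 2 * χ x * T x := by
    rw [← integral_add hA' hcross_int]
    exact integral_congr_ae (Filter.Eventually.of_forall fun x => hGI x)
  have hI2 : (∫ x in ω, κinv x * (inner ℝ (u x) ((χ x) ^ 2 • u x) : ℝ))
      = ∫ x in ω, κinv x * (χ x) ^ 2 * ‖u x‖ ^ 2 :=
    integral_congr_ae (Filter.Eventually.of_forall fun x => by
      show κinv x * (inner ℝ (u x) ((χ x) ^ 2 • u x) : ℝ) = κinv x * (χ x) ^ 2 * ‖u x‖ ^ 2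
      rw [real_inner_smul_right, real_inner_self_eq_norm_sq]; ring)
  rw [hI1, hI2] at hweak
  -- lower bound on the cross integral
  have hIcross_ge : -(2 * (∫ x in ω, ‖gradient χ x‖ ^ 2 * ‖u x‖ ^ 2)
      + 2⁻¹ * ∫ x in ω, (χ x) ^ 2 * gradSq u x) ≤ ∫ x in ω, 2 * χ x * T x := by
    have habs : |∫ x in ω, 2 * χ x * T x| ≤ ∫ x in ω, |2 * χ x * T x| := by
      simpa only [Real.norm_eq_abs] using
        norm_integral_le_integral_norm (μ := volume.restrict ω) (fun x => 2 * χ x * T x)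
    have h2 : (∫ x in ω, |2 * χ x * T x|)
        ≤ ∫ x in ω, (2 * (‖gradient χ x‖ ^ 2 * ‖u x‖ ^ 2) + 2⁻¹ * ((χ x) ^ 2 * gradSq u x)) :=
      integral_mono hcross_int.abs hbound_int hcrossbd
    have h3 : (∫ x in ω,
          (2 * (‖gradient χ x‖ ^ 2 * ‖u x‖ ^ 2) + 2⁻¹ * ((χ x) ^ 2 * gradSq u x)))
        = 2 * (∫ x in ω, ‖gradient χ x‖ ^ 2 * ‖u x‖ ^ 2)
          + 2⁻¹ * ∫ x in ω, (χ x) ^ 2 * gradSq u x := by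
      rw [integral_add (hG'.const_mul 2) (hA'.const_mul 2⁻¹), integral_const_mul,
        integral_const_mul]
    have h4 := neg_abs_le (∫ x in ω, 2 * χ x * T x)
    linarith
  -- upper bound on the pressure integral
  have hph : ∀ x, p x * ediv (fun y => (χ y) ^ 2 • u y) x
      ≤ 2⁻¹ * (p x) ^ 2 + (ediv u x) ^ 2
        + 4 * (‖gradient χ x‖ ^ 2 * ‖u x‖ ^ 2) := by
    intro x
    rw [hdiv x]
    obtain ⟨hc0, hc1⟩ := hχ01 x
    have hc2 : (χ x) ^ 2 ≤ 1 := by nlinarith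
    have hc4 : (χ x) ^ 4 ≤ 1 := by nlinarith
    have hs2 := hS2 x
    nlinarith [sq_nonneg (p x - ((χ x) ^ 2 * ediv u x + 2 * χ x * S x)),
      sq_nonneg ((χ x) ^ 2 * ediv u x - 2 * χ x * S x),
      sq_nonneg (ediv u x), sq_nonneg (S x), sq_nonneg (p x)]
  have hg1 : Integrable (fun x => 2⁻¹ * (p x) ^ 2 + (ediv u x) ^ 2) (volume.restrict ω) :=
    (hP'.const_mul 2⁻¹).add hD'
  have hgint : Integrable (fun x => 2⁻¹ * (p x) ^ 2 + (ediv u x) ^ 2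
      + 4 * (‖gradient χ x‖ ^ 2 * ‖u x‖ ^ 2)) (volume.restrict ω) :=
    hg1.add (hG'.const_mul 4)
  have hIP_nonneg : 0 ≤ ∫ x in ω, (p x) ^ 2 :=
    setIntegral_nonneg hmeas fun x _ => sq_nonneg _
  have hID_nonneg : 0 ≤ ∫ x in ω, (ediv u x) ^ 2 :=
    setIntegral_nonneg hmeas fun x _ => sq_nonneg _
  have hIG_nonneg : 0 ≤ ∫ x in ω, ‖gradient χ x‖ ^ 2 * ‖u x‖ ^ 2 :=
    setIntegral_nonneg hmeas fun x _ => by positivity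
  have hIK_nonneg : 0 ≤ ∫ x in ω, (κinv x) ^ 2 * ‖u x‖ ^ 2 :=
    setIntegral_nonneg hmeas fun x _ => by positivity
  have hIB_nonneg : 0 ≤ ∫ x in ω, κinv x * (χ x) ^ 2 * ‖u x‖ ^ 2 :=
    setIntegral_nonneg hmeas fun x hx =>
      mul_nonneg (mul_nonneg (hκ0 x hx) (sq_nonneg _)) (sq_nonneg _)
  have hIA_nonneg : 0 ≤ ∫ x in ω, (χ x) ^ 2 * gradSq u x :=
    setIntegral_nonneg hmeas fun x _ => mul_nonneg (sq_nonneg _) (hgradSq_nonneg x)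
  have hIp_le : (∫ x in ω, p x * ediv (fun y => (χ y) ^ 2 • u y) x)
      ≤ 2⁻¹ * (∫ x in ω, (p x) ^ 2) + (∫ x in ω, (ediv u x) ^ 2)
        + 4 * ∫ x in ω, ‖gradient χ x‖ ^ 2 * ‖u x‖ ^ 2 := by
    by_cases hint : Integrable
        (fun x => p x * ediv (fun y => (χ y) ^ 2 • u y) x) (volume.restrict ω)
    · have h := integral_mono hint hgint hph
      rw [integral_add hg1 (hG'.const_mul 4),
        integral_add (hP'.const_mul 2⁻¹) hD', integral_const_mul, integral_const_mul] at h
      linarith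
    · rw [integral_undef hint]
      linarith
  linarith
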